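/- Let I be a strongly stable monomial ideal of S and let k ≥ 1 be an integer. Then the k-th symbolic power I^(k) is a strongly stable monomial ideal. -/

import Mathlib

open MvPolynomial

/-- An ideal of `K[x_1, …, x_n]` is a monomial ideal if it is generated by monomials. -/
def IsMonomialIdeal {K : Type*} [Field K] {n : ℕ} (I : Ideal (MvPolynomial (Fin n) K)) : Prop :=
  ∃ G : Set (Fin n →₀ ℕ),
    I = Ideal.span ((fun a => (monomial a (1 : K) : MvPolynomial (Fin n) K)) '' G)

/-- A monomial ideal `I` is strongly stable if for every monomial `u ∈ I` and all
indices `i < j` with `x_j ∣ u`, one has `x_i * (u / x_j) ∈ I`. -/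
def IsStronglyStable {K : Type*} [Field K] {n : ℕ}
    (I : Ideal (MvPolynomial (Fin n) K)) : Prop :=
  ∀ a : Fin n →₀ ℕ, (monomial a (1 : K) : MvPolynomial (Fin n) K) ∈ I →
    ∀ i j : Fin n, i < j → 1 ≤ a j →
      (monomial (a - Finsupp.single j 1 + Finsupp.single i 1) (1 : K) :
        MvPolynomial (Fin n) K) ∈ I

/-- The kernel of `R → (R/I)_P`: the ideal `{r : r * s ∈ I for some s ∉ P}`. -/
def kerLoc {R : Type*} [CommRing R] (I P : Ideal R) (hP : P.IsPrime) : Ideal R where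
  carrier := {r : R | ∃ s, s ∉ P ∧ r * s ∈ I}
  add_mem' := by
    rintro a b ⟨s, hs, has⟩ ⟨t, ht, hbt⟩
    refine ⟨s * t, fun h => (hP.mem_or_mem h).elim hs ht, ?_⟩
    have h : (a + b) * (s * t) = (a * s) * t + (b * t) * s := by ring
    rw [h]
    exact Ideal.add_mem _ (Ideal.mul_mem_right _ _ has) (Ideal.mul_mem_right _ _ hbt)
  zero_mem' := ⟨1, fun h => hP.ne_top ((Ideal.eq_top_iff_one P).mpr h), by simp⟩
  smul_mem' := by
    rintro c a ⟨s, hs, has⟩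
    exact ⟨s, hs, by rw [smul_eq_mul, mul_assoc]; exact Ideal.mul_mem_left _ _ has⟩

/-- The `k`-th symbolic power of an ideal `I`:
`I^(k) = ⋂_{P ∈ Min(I)} ker (R → (R/I^k)_P)`. -/
def symbolicPower {R : Type*} [CommRing R] (I : Ideal R) (k : ℕ) : Ideal R :=
  ⨅ P : I.minimalPrimes, kerLoc (I ^ k) P.1 P.2.1.1

/- ------------------------------------------------------------------ -/
/- Auxiliary material                                                  -/
/- ------------------------------------------------------------------ -/

open Finsupp
open scoped Pointwise

noncomputable section SymbPowAux

variable {K : Type*} [Field K] {n : ℕ}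

lemma mem_kerLoc {R : Type*} [CommRing R] {I P : Ideal R} {hP : P.IsPrime} {r : R} :
    r ∈ kerLoc I P hP ↔ ∃ s, s ∉ P ∧ r * s ∈ I := Iff.rfl

/-- span of monomials -/
def spanM (K : Type*) [Field K] {n : ℕ} (G : Set (Fin n →₀ ℕ)) : Ideal (MvPolynomial (Fin n) K) :=
  Ideal.span ((fun a => (monomial a (1 : K) : MvPolynomial (Fin n) K)) '' G)

lemma mem_spanM {G : Set (Fin n →₀ ℕ)} {p : MvPolynomial (Fin n) K} :
    p ∈ spanM K G ↔ ∀ b ∈ p.support, ∃ g ∈ G, g ≤ b :=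
  mem_ideal_span_monomial_image

lemma monomial_mem_spanM {G : Set (Fin n →₀ ℕ)} {b : Fin n →₀ ℕ} :
    (monomial b (1 : K) : MvPolynomial (Fin n) K) ∈ spanM K G ↔ ∃ g ∈ G, g ≤ b := by
  classical
  rw [mem_spanM, support_monomial, if_neg (one_ne_zero : (1:K) ≠ 0)]
  simp

lemma mono_mem_of_mem_supp {G : Set (Fin n →₀ ℕ)} {q : MvPolynomial (Fin n) K}
    (hq : q ∈ spanM K G) {u : Fin n →₀ ℕ} (hu : u ∈ q.support) :
    (monomial u (1 : K) : MvPolynomial (Fin n) K) ∈ spanM K G :=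
  monomial_mem_spanM.2 (mem_spanM.1 hq u hu)

lemma spanM_mul (G1 G2 : Set (Fin n →₀ ℕ)) :
    spanM K G1 * spanM K G2 = spanM K (G1 + G2) := by
  rw [spanM, spanM, spanM, Ideal.span_mul_span']
  congr 1
  ext z
  constructor
  · rintro ⟨_, ⟨a, ha, rfl⟩, _, ⟨b, hb, rfl⟩, rfl⟩
    exact ⟨a + b, Set.add_mem_add ha hb, by simp [monomial_mul]⟩
  · rintro ⟨_, ⟨a, ha, b, hb, rfl⟩, rfl⟩
    exact ⟨_, ⟨a, ha, rfl⟩, _, ⟨b, hb, rfl⟩, by simp [monomial_mul]⟩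

/-- key dominance step from strong stability -/
lemma SS_dominate {G : Set (Fin n →₀ ℕ)} (hSS : IsStronglyStable (spanM K G))
    {g : Fin n →₀ ℕ} (hg : g ∈ G) {i j : Fin n} (hij : i < j) (hgj : 1 ≤ g j) :
    ∃ g' ∈ G, g' ≤ g - Finsupp.single j 1 + Finsupp.single i 1 := by
  have h1 : (monomial g (1:K)) ∈ spanM K G := monomial_mem_spanM.2 ⟨g, hg, le_refl g⟩
  exact monomial_mem_spanM.1 (hSS g h1 i j hij hgj)

lemma sub_add_single_apply (a : Fin n →₀ ℕ) {i j : Fin n} (l : Fin n) :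
    ((a - Finsupp.single j 1 + Finsupp.single i 1 : Fin n →₀ ℕ)) l
      = a l - (if j = l then 1 else 0) + (if i = l then 1 else 0) := by
  classical
  simp [Finsupp.add_apply, Finsupp.tsub_apply, Finsupp.single_apply]

lemma SS_spanM_mul {G1 G2 : Set (Fin n →₀ ℕ)}
    (h1 : IsStronglyStable (spanM K G1)) (h2 : IsStronglyStable (spanM K G2)) :
    IsStronglyStable (spanM K G1 * spanM K G2) := by
  classical
  rw [spanM_mul]
  intro a ha i j hij haj
  rw [monomial_mem_spanM] at ha ⊢
  obtain ⟨g, ⟨g1, hg1, g2, hg2, rfl⟩, hle⟩ := ha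
  have hlej := hle j
  rw [Finsupp.add_apply] at hlej
  rcases lt_or_eq_of_le hlej with hlt | heq
  · refine ⟨g1 + g2, ⟨g1, hg1, g2, hg2, rfl⟩, fun l => ?_⟩
    rw [sub_add_single_apply a]
    have := hle l
    rw [Finsupp.add_apply] at this
    by_cases hlj : j = l <;> by_cases hli : i = l <;> simp_all <;> omega
  · have : 1 ≤ g1 j ∨ 1 ≤ g2 j := by omega
    rcases this with hgj | hgj
    · obtain ⟨g1', hg1', hle1⟩ := SS_dominate h1 hg1 hij hgj
      refine ⟨g1' + g2, ⟨g1', hg1', g2, hg2, rfl⟩, fun l => ?_⟩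
      have h1l := hle1 l
      rw [sub_add_single_apply g1] at h1l
      rw [sub_add_single_apply a]
      have := hle l
      rw [Finsupp.add_apply] at this ⊢
      by_cases hlj : j = l <;> by_cases hli : i = l <;> simp_all <;> omega
    · obtain ⟨g2', hg2', hle2⟩ := SS_dominate h2 hg2 hij hgj
      refine ⟨g1 + g2', ⟨g1, hg1, g2', hg2', rfl⟩, fun l => ?_⟩
      have h2l := hle2 l
      rw [sub_add_single_apply g2] at h2l
      rw [sub_add_single_apply a]
      have := hle l
      rw [Finsupp.add_apply] at this ⊢
      by_cases hlj : j = l <;> by_cases hli : i = l <;> simp_all <;> omega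

lemma pow_spanM {G : Set (Fin n →₀ ℕ)} (hSS : IsStronglyStable (spanM K G)) :
    ∀ k : ℕ, 1 ≤ k → (∃ Gk, spanM K G ^ k = spanM K Gk) ∧ IsStronglyStable (spanM K G ^ k) := by
  intro k
  induction k with
  | zero => intro h; omega
  | succ m ih =>
    intro _
    by_cases hm0 : m = 0
    · subst hm0; rw [pow_one]
      exact ⟨⟨G, rfl⟩, hSS⟩
    · have hm : 1 ≤ m := by omega
      obtain ⟨⟨Gm, hGm⟩, hSSm⟩ := ih hm
      rw [pow_succ, hGm]
      constructor
      · exact ⟨Gm + G, spanM_mul Gm G⟩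
      · exact SS_spanM_mul (hGm ▸ hSSm) hSS

/-- the ideal generated by the variables in `A` -/
def varSpan (K : Type*) [Field K] {n : ℕ} (A : Set (Fin n)) : Ideal (MvPolynomial (Fin n) K) :=
  Ideal.span (MvPolynomial.X '' A)

lemma mem_varSpan {A : Set (Fin n)} {p : MvPolynomial (Fin n) K} :
    p ∈ varSpan K A ↔ ∀ m ∈ p.support, ∃ i ∈ A, (m : Fin n →₀ ℕ) i ≠ 0 :=
  mem_ideal_span_X_image

lemma monomial_mem_varSpan {A : Set (Fin n)} {b : Fin n →₀ ℕ} :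
    (monomial b (1 : K) : MvPolynomial (Fin n) K) ∈ varSpan K A ↔ ∃ i ∈ A, b i ≠ 0 := by
  classical
  rw [mem_varSpan, support_monomial, if_neg (one_ne_zero : (1:K) ≠ 0)]
  simp

lemma varSpan_isPrime (A : Set (Fin n)) : (varSpan K A).IsPrime := by
  classical
  set f : MvPolynomial (Fin n) K →ₐ[K] MvPolynomial (Fin n) K :=
    aeval (fun i => if i ∈ A then 0 else X i) with hf
  have hker : varSpan K A
      = RingHom.ker (f : MvPolynomial (Fin n) K →+* MvPolynomial (Fin n) K) := by
    apply le_antisymm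
    · rw [varSpan, Ideal.span_le]
      rintro _ ⟨i, hi, rfl⟩
      simp [RingHom.mem_ker, hf, if_pos hi]
    · intro p hp
      rw [RingHom.mem_ker] at hp
      rw [mem_varSpan]
      by_contra hcon
      push_neg at hcon
      obtain ⟨m0, hm0, hm0A⟩ := hcon
      have hfz : ∀ (v : Fin n →₀ ℕ) (c : K), (∃ i ∈ A, v i ≠ 0) → f (monomial v c) = 0 := by
        rintro v c ⟨i, hiA, hvi⟩
        rw [hf, aeval_monomial]
        have : (v.prod fun i k => (if i ∈ A then 0 else X i : MvPolynomial (Fin n) K) ^ k)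
            = 0 := by
          apply Finset.prod_eq_zero (Finsupp.mem_support_iff.2 hvi)
          simp [hiA, hvi]
        rw [this, mul_zero]
      have hfk : ∀ (v : Fin n →₀ ℕ) (c : K), (∀ i ∈ A, v i = 0) →
          f (monomial v c) = monomial v c := by
        intro v c hv
        rw [hf, aeval_monomial]
        have : (v.prod fun i k => (if i ∈ A then 0 else X i : MvPolynomial (Fin n) K) ^ k)
            = v.prod fun i k => (X i) ^ k := by
          apply Finset.prod_congr rfl
          intro i hi
          have : i ∉ A := fun hiA => (Finsupp.mem_support_iff.1 hi) (hv i hiA)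
          simp [this]
        rw [this, MvPolynomial.monomial_eq, MvPolynomial.algebraMap_eq]
      have hsum : f p = ∑ v ∈ p.support, f (monomial v (coeff v p)) := by
        conv_lhs => rw [p.as_sum]
        rw [map_sum]
      have : coeff m0 (f p) = coeff m0 p := by
        rw [hsum, MvPolynomial.coeff_sum]
        rw [Finset.sum_eq_single m0]
        · rw [hfk m0 _ hm0A, coeff_monomial, if_pos rfl]
        · intro v hv hne
          by_cases hvA : ∃ i ∈ A, v i ≠ 0
          · rw [hfz v _ hvA, coeff_zero]
          · push_neg at hvA
            rw [hfk v _ hvA, coeff_monomial, if_neg hne]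
        · intro h; exact absurd hm0 h
      have hp' : f p = 0 := hp
      rw [hp', coeff_zero] at this
      exact (Finsupp.mem_support_iff.1 hm0) this.symm
  rw [hker]
  exact RingHom.ker_isPrime _

lemma minimalPrime_eq_varSpan {G : Set (Fin n →₀ ℕ)} {I P : Ideal (MvPolynomial (Fin n) K)}
    (hI : I = spanM K G) (hP : P ∈ I.minimalPrimes) :
    P = varSpan K {i | X i ∈ P} := by
  classical
  subst hI
  obtain ⟨⟨hprime, hle⟩, hmin⟩ := hP
  set A : Set (Fin n) := {i | X i ∈ P} with hA
  have h1 : varSpan K A ≤ P := by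
    rw [varSpan, Ideal.span_le]
    rintro _ ⟨i, hi, rfl⟩
    exact hi
  have h2 : spanM K G ≤ varSpan K A := by
    rw [spanM, Ideal.span_le]
    rintro _ ⟨g, hg, rfl⟩
    have hgP : (monomial g (1:K)) ∈ P := hle (Ideal.subset_span ⟨g, hg, rfl⟩)
    rw [MvPolynomial.monomial_eq, map_one, one_mul] at hgP
    rw [Finsupp.prod] at hgP
    have : ∃ i ∈ g.support, (X i : MvPolynomial (Fin n) K) ^ g i ∈ P :=
      (Ideal.IsPrime.prod_mem_iff (hp := hprime)).1 hgP
    obtain ⟨i, hi, hXpow⟩ := this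
    have hXi : (X i : MvPolynomial (Fin n) K) ∈ P := hprime.mem_of_pow_mem _ hXpow
    exact monomial_mem_varSpan.2 ⟨i, hXi, Finsupp.mem_support_iff.1 hi⟩
  exact le_antisymm (hmin ⟨varSpan_isPrime A, h2⟩ h1) h1

/-- the part of `p` whose exponents satisfy `pred` -/
def mslice (pred : (Fin n →₀ ℕ) → Prop) [DecidablePred pred] (p : MvPolynomial (Fin n) K) :
    MvPolynomial (Fin n) K :=
  ∑ a ∈ p.support.filter pred, monomial a (coeff a p)

lemma coeff_mslice (pred : (Fin n →₀ ℕ) → Prop) [DecidablePred pred] (p : MvPolynomial (Fin n) K)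
    (u : Fin n →₀ ℕ) : coeff u (mslice pred p) = if pred u then coeff u p else 0 := by
  classical
  rw [mslice, MvPolynomial.coeff_sum]
  simp_rw [coeff_monomial]
  rw [Finset.sum_ite_eq' (p.support.filter pred) u (fun a => coeff a p)]
  by_cases hu : pred u
  · by_cases h2 : u ∈ p.support
    · rw [if_pos (Finset.mem_filter.2 ⟨h2, hu⟩), if_pos hu]
    · rw [if_neg (fun hc => h2 (Finset.mem_filter.1 hc).1), if_pos hu,
        MvPolynomial.notMem_support_iff.1 h2]
  · rw [if_neg (fun hc => hu (Finset.mem_filter.1 hc).2), if_neg hu]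

lemma key_lemma (H : Set (Fin n →₀ ℕ)) (A : Set (Fin n)) :
    ∀ (N : ℕ) (p s : MvPolynomial (Fin n) K), p.support.card ≤ N →
      p * s ∈ spanM K H → s ∉ varSpan K A →
      ∀ b ∈ p.support, ∃ c : Fin n →₀ ℕ, (∀ i ∈ A, c i = 0) ∧
        (monomial (b + c) (1 : K) : MvPolynomial (Fin n) K) ∈ spanM K H := by
  classical
  intro N
  induction N with
  | zero =>
    intro p s hcard _ _ b hb
    rw [Finset.card_eq_zero.1 (Nat.le_zero.1 hcard)] at hb
    exact absurd hb (Finset.notMem_empty b)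
  | succ N ih =>
    intro p s hcard hps hsP b hb
    set πA : (Fin n →₀ ℕ) → (Fin n →₀ ℕ) := fun d => d.filter (· ∈ A) with hπA
    have hπA_add : ∀ x y, πA (x + y) = πA x + πA y := fun x y => Finsupp.filter_add
    have hπA_apply : ∀ d i, πA d i = if i ∈ A then d i else 0 :=
      fun d i => Finsupp.filter_apply _ d i
    have hpne : p.support.Nonempty := ⟨b, hb⟩
    have hFne : (p.support.image (fun d => toLex (πA d))).Nonempty := hpne.image _
    set d0 := (p.support.image (fun d => toLex (πA d))).min' hFne with hd0
    have hd0le : ∀ x ∈ p.support, d0 ≤ toLex (πA x) :=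
      fun x hx => Finset.min'_le _ _ (Finset.mem_image_of_mem _ hx)
    obtain ⟨b1, hb1p, hb1d0⟩ : ∃ b1 ∈ p.support, toLex (πA b1) = d0 := by
      obtain ⟨b1, hb1, h⟩ := Finset.mem_image.1 (Finset.min'_mem _ hFne)
      exact ⟨b1, hb1, h⟩
    set p0 := mslice (fun d => toLex (πA d) = d0) p with hp0
    set s0 := mslice (fun d => πA d = 0) s with hs0
    have hcoeff_p0 : ∀ u, coeff u p0 = if toLex (πA u) = d0 then coeff u p else 0 :=
      fun u => by rw [hp0, coeff_mslice]
    have hcoeff_s0 : ∀ u, coeff u s0 = if πA u = 0 then coeff u s else 0 :=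
      fun u => by rw [hs0, coeff_mslice]
    obtain ⟨a0, ha0s, ha0A⟩ : ∃ a0 ∈ s.support, ∀ i ∈ A, a0 i = 0 := by
      by_contra hcon
      push_neg at hcon
      exact hsP (mem_varSpan.2 fun m hm => by
        obtain ⟨i, hi, h⟩ := hcon m hm; exact ⟨i, hi, h⟩)
    have hπa0 : πA a0 = 0 := by
      ext i
      rw [hπA_apply]
      by_cases hi : i ∈ A
      · rw [if_pos hi, ha0A i hi]; rfl
      · rw [if_neg hi]; rfl
    have hs0ne : s0 ≠ 0 := fun h => (MvPolynomial.mem_support_iff.1 ha0s)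
      (by have := hcoeff_s0 a0; rw [h, if_pos hπa0, coeff_zero] at this; exact this.symm)
    have hsupp_s0 : ∀ u ∈ s0.support, πA u = 0 := by
      intro u hu
      have := MvPolynomial.mem_support_iff.1 hu
      rw [hcoeff_s0 u] at this
      by_contra h
      rw [if_neg h] at this
      exact this rfl
    have hs0P : s0 ∉ varSpan K A := by
      intro hmem
      obtain ⟨u, hu⟩ := Finset.nonempty_iff_ne_empty.2
        (fun h => hs0ne (MvPolynomial.support_eq_empty.1 h))
      obtain ⟨i, hiA, hui⟩ := mem_varSpan.1 hmem u hu
      have h0 := hsupp_s0 u hu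
      have := congrArg (fun f => f i) h0
      simp only [hπA_apply] at this
      rw [if_pos hiA] at this
      exact hui this
    have hp0ne : p0 ≠ 0 := fun h => (MvPolynomial.mem_support_iff.1 hb1p)
      (by have := hcoeff_p0 b1; rw [h, if_pos hb1d0, coeff_zero] at this; exact this.symm)
    have hsupp_p0 : ∀ u ∈ p0.support, toLex (πA u) = d0 := by
      intro u hu
      have := MvPolynomial.mem_support_iff.1 hu
      rw [hcoeff_p0 u] at this
      by_contra h
      rw [if_neg h] at this
      exact this rfl
    have hcoeff_eq : ∀ u, toLex (πA u) = d0 → coeff u (p0 * s0) = coeff u (p * s) := by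
      intro u hu
      rw [MvPolynomial.coeff_mul, MvPolynomial.coeff_mul]
      apply Finset.sum_congr rfl
      rintro ⟨x1, x2⟩ hx
      have hx12 : x1 + x2 = u := Finset.HasAntidiagonal.mem_antidiagonal.1 hx
      simp only [hcoeff_p0, hcoeff_s0]
      by_cases hc1 : coeff x1 p = 0
      · by_cases h1 : toLex (πA x1) = d0 <;> by_cases h2 : πA x2 = 0 <;>
          simp [h1, h2, hc1]
      by_cases hc2 : coeff x2 s = 0
      · by_cases h1 : toLex (πA x1) = d0 <;> by_cases h2 : πA x2 = 0 <;>
          simp [h1, h2, hc2]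
      have hx1p : x1 ∈ p.support := MvPolynomial.mem_support_iff.2 hc1
      have ht1 : d0 ≤ toLex (πA x1) := hd0le x1 hx1p
      have hsum : toLex (πA x1) + toLex (πA x2) = d0 := by
        rw [← hu, ← hx12, hπA_add]; rfl
      have ht2 : (0 : Lex (Fin n →₀ ℕ)) ≤ toLex (πA x2) := Finsupp.toLex_monotone zero_le
      have h1 : toLex (πA x1) = d0 := by
        refine le_antisymm ?_ ht1
        calc toLex (πA x1) = toLex (πA x1) + 0 := (add_zero _).symm
          _ ≤ toLex (πA x1) + toLex (πA x2) := add_le_add le_rfl ht2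
          _ = d0 := hsum
      have h2' : toLex (πA x2) = 0 := by
        apply add_left_cancel (a := toLex (πA x1))
        rw [hsum, add_zero, h1]
      have h2 : πA x2 = 0 := toLex.injective h2'
      rw [if_pos h1, if_pos h2]
    have hp0s0_mem : p0 * s0 ∈ spanM K H := by
      rw [mem_spanM]
      intro u hu
      obtain ⟨x1, hx1, x2, hx2, rfl⟩ := Finset.mem_add.1 (MvPolynomial.support_mul _ _ hu)
      have hlayer : toLex (πA (x1 + x2)) = d0 := by
        rw [hπA_add, hsupp_s0 x2 hx2, add_zero, hsupp_p0 x1 hx1]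
      have hne : coeff (x1 + x2) (p * s) ≠ 0 := by
        rw [← hcoeff_eq _ hlayer]
        exact MvPolynomial.mem_support_iff.1 hu
      exact mem_spanM.1 hps _ (MvPolynomial.mem_support_iff.2 hne)
    by_cases hbd : toLex (πA b) = d0
    · have hne : p0 * s0 ≠ 0 := mul_ne_zero hp0ne hs0ne
      obtain ⟨u, hu⟩ := Finset.nonempty_iff_ne_empty.2
        (fun h => hne (MvPolynomial.support_eq_empty.1 h))
      obtain ⟨h, hH, hhu⟩ := mem_spanM.1 hp0s0_mem u hu
      obtain ⟨x1, hx1, x2, hx2, rfl⟩ := Finset.mem_add.1 (MvPolynomial.support_mul _ _ hu)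
      have hπu : πA (x1 + x2) = πA b := by
        apply toLex.injective
        rw [hπA_add, hsupp_s0 x2 hx2, add_zero, hsupp_p0 x1 hx1, hbd]
      refine ⟨(x1 + x2).filter (fun i => i ∉ A), fun i hi => by
        rw [Finsupp.filter_apply, if_neg (fun hc => hc hi)], ?_⟩
      rw [monomial_mem_spanM]
      refine ⟨h, hH, fun l => ?_⟩
      have hhl : h l ≤ (x1 + x2) l := hhu l
      rw [Finsupp.add_apply, Finsupp.filter_apply]
      by_cases hl : l ∈ A
      · have : (x1 + x2) l = b l := by
          have := congrArg (fun f => f l) hπu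
          simp only [hπA_apply] at this
          rw [if_pos hl, if_pos hl] at this
          exact this
        rw [if_neg (fun hc => hc hl)]
        omega
      · rw [if_pos hl]
        omega
    · set q := p - p0 with hq
      have hqco : ∀ u, coeff u q = coeff u p - coeff u p0 := fun u => by
        rw [hq, MvPolynomial.coeff_sub]
      have hqb : coeff b q = coeff b p := by
        rw [hqco, hcoeff_p0, if_neg hbd, sub_zero]
      have hbq : b ∈ q.support :=
        MvPolynomial.mem_support_iff.2 (by rw [hqb]; exact MvPolynomial.mem_support_iff.1 hb)
      have hqsupp : q.support ⊆ p.support.erase b1 := by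
        intro x hx
        have hcx : coeff x q ≠ 0 := MvPolynomial.mem_support_iff.1 hx
        rw [hqco, hcoeff_p0] at hcx
        have hxp : x ∈ p.support := by
          rw [MvPolynomial.mem_support_iff]
          intro h0
          rw [h0] at hcx
          by_cases h1 : toLex (πA x) = d0 <;> simp [h1] at hcx
        have hxne : x ≠ b1 := by
          rintro rfl
          rw [if_pos hb1d0, sub_self] at hcx
          exact hcx rfl
        exact Finset.mem_erase.2 ⟨hxne, hxp⟩
      have hcard' : q.support.card ≤ N := by
        calc q.support.card ≤ (p.support.erase b1).card := Finset.card_le_card hqsupp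
          _ = p.support.card - 1 := Finset.card_erase_of_mem hb1p
          _ ≤ N := by omega
      have hmem : q * (s * s0) ∈ spanM K H := by
        have heq : q * (s * s0) = (p * s) * s0 - (p0 * s0) * s := by rw [hq]; ring
        rw [heq]
        exact sub_mem (Ideal.mul_mem_right _ _ hps) (Ideal.mul_mem_right _ _ hp0s0_mem)
      have hss0 : s * s0 ∉ varSpan K A := by
        intro hmem'
        rcases (varSpan_isPrime A).mem_or_mem hmem' with h | h
        exacts [hsP h, hs0P h]
      exact ih q (s * s0) hcard' hmem hss0 b hbq

lemma exists_monomial_not_mem {P : Ideal (MvPolynomial (Fin n) K)} {s : MvPolynomial (Fin n) K}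
    (hs : s ∉ P) : ∃ a ∈ s.support, (monomial a (1:K) : MvPolynomial (Fin n) K) ∉ P := by
  by_contra h
  push_neg at h
  apply hs
  rw [s.as_sum]
  apply Ideal.sum_mem
  intro a ha
  have : (monomial a (coeff a s) : MvPolynomial (Fin n) K)
      = C (coeff a s) * monomial a 1 := by
    rw [C_mul_monomial, mul_one]
  rw [this]
  exact Ideal.mul_mem_left _ _ (h a ha)

lemma kerLoc_termwise {Hk : Set (Fin n →₀ ℕ)} {A : Set (Fin n)}
    {J P : Ideal (MvPolynomial (Fin n) K)} (hJ : J = spanM K Hk) (hP : P.IsPrime)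
    (hPA : P = varSpan K A) {p : MvPolynomial (Fin n) K} (hp : p ∈ kerLoc J P hP) :
    ∀ b ∈ p.support, (monomial b (1:K) : MvPolynomial (Fin n) K) ∈ kerLoc J P hP := by
  obtain ⟨s, hs, hps⟩ := hp
  intro b hb
  obtain ⟨c, hc, hmem⟩ := key_lemma Hk A p.support.card p s le_rfl (hJ ▸ hps)
    (fun hx => hs (hPA ▸ hx)) b hb
  refine ⟨monomial c 1, ?_, ?_⟩
  · rw [hPA, monomial_mem_varSpan]
    rintro ⟨i, hi, hci⟩
    exact hci (hc i hi)
  · rw [monomial_mul, one_mul, hJ]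
    exact hmem

lemma shift_add (b a : Fin n →₀ ℕ) {i j : Fin n} (hbj : 1 ≤ b j) :
    ((b - Finsupp.single j 1 + Finsupp.single i 1) + a : Fin n →₀ ℕ)
      = (b + a) - Finsupp.single j 1 + Finsupp.single i 1 := by
  classical
  ext l
  rw [Finsupp.add_apply, sub_add_single_apply b, sub_add_single_apply (b + a),
    Finsupp.add_apply]
  by_cases hlj : j = l <;> by_cases hli : i = l <;> simp_all <;> omega

lemma kerLoc_SS {Hk : Set (Fin n →₀ ℕ)} {J P : Ideal (MvPolynomial (Fin n) K)}
    (hJ : J = spanM K Hk) (hSSk : IsStronglyStable J) (hP : P.IsPrime)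
    {b : Fin n →₀ ℕ} (hb : (monomial b (1:K) : MvPolynomial (Fin n) K) ∈ kerLoc J P hP)
    {i j : Fin n} (hij : i < j) (hbj : 1 ≤ b j) :
    (monomial (b - Finsupp.single j 1 + Finsupp.single i 1) (1:K) : MvPolynomial (Fin n) K)
      ∈ kerLoc J P hP := by
  obtain ⟨s, hs, hbs⟩ := hb
  obtain ⟨a, has, haP⟩ := exists_monomial_not_mem hs
  have hba : (monomial (b + a) (1:K) : MvPolynomial (Fin n) K) ∈ J := by
    rw [hJ]
    apply mono_mem_of_mem_supp (hJ ▸ hbs)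
    rw [MvPolynomial.mem_support_iff, MvPolynomial.coeff_monomial_mul, one_mul]
    exact MvPolynomial.mem_support_iff.1 has
  have hstep := hSSk (b + a) hba i j hij
    (by rw [Finsupp.add_apply]; omega)
  refine ⟨monomial a 1, haP, ?_⟩
  rw [monomial_mul, one_mul, shift_add b a hbj]
  exact hstep

end SymbPowAux

/-- If `I` is a strongly stable monomial ideal, then the `k`-th symbolic power `I^(k)`
is a strongly stable monomial ideal. -/
theorem symbolicPower_stronglyStable {K : Type*} [Field K] {n : ℕ}
    (I : Ideal (MvPolynomial (Fin n) K)) (hmon : IsMonomialIdeal I)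
    (hSS : IsStronglyStable I) (k : ℕ) (hk : 1 ≤ k) :
    IsMonomialIdeal (symbolicPower I k) ∧ IsStronglyStable (symbolicPower I k) := by
  classical
  obtain ⟨G, hG⟩ := hmon
  have hI : I = spanM K G := hG
  have hSS' : IsStronglyStable (spanM K G) := hI ▸ hSS
  obtain ⟨⟨Hk, hHk⟩, hSSk⟩ := pow_spanM hSS' k hk
  have hIk : I ^ k = spanM K Hk := by rw [hI, hHk]
  have hSSIk : IsStronglyStable (I ^ k) := by rw [hI]; exact hSSk
  have hmemS : ∀ x : MvPolynomial (Fin n) K,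
      x ∈ symbolicPower I k ↔ ∀ P : I.minimalPrimes, x ∈ kerLoc (I ^ k) P.1 P.2.1.1 :=
    fun x => Submodule.mem_iInf _
  have hvar : ∀ P : I.minimalPrimes, P.1 = varSpan K {i | X i ∈ P.1} :=
    fun P => minimalPrime_eq_varSpan hI P.2
  constructor
  · -- monomial ideal
    refine ⟨{b | (monomial b (1:K) : MvPolynomial (Fin n) K) ∈ symbolicPower I k}, ?_⟩
    apply le_antisymm
    · intro p hp
      rw [p.as_sum]
      apply Ideal.sum_mem
      intro b hb
      have hbS : (monomial b (1:K) : MvPolynomial (Fin n) K) ∈ symbolicPower I k := by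
        rw [hmemS]
        intro P
        exact kerLoc_termwise hIk P.2.1.1 (hvar P) ((hmemS p).1 hp P) b hb
      have : (monomial b (coeff b p) : MvPolynomial (Fin n) K)
          = C (coeff b p) * monomial b 1 := by rw [C_mul_monomial, mul_one]
      rw [this]
      exact Ideal.mul_mem_left _ _ (Ideal.subset_span ⟨b, hbS, rfl⟩)
    · rw [Ideal.span_le]
      rintro _ ⟨b, hb, rfl⟩
      exact hb
  · -- strongly stable
    intro b hb i j hij hbj
    rw [hmemS] at hb ⊢
    intro P
    exact kerLoc_SS hIk hSSIk P.2.1.1 (hb P) hij hbj
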